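/- With notation from the description of η_{s,t,x̃}: the coefficients c_{pi−1}, c_{p²−1} ∈ F_p[s,t] satisfy −(ψ_{p,s,t}(x) mod p)² = Σ_{i=1}^{p−1} c_{pi−1} x^{p²−pi} + c_{p²−1}; in particular c_{p²−1} = −a_{(p²−1)/2}², where a_{(p²−1)/2} is the constant-in-X coefficient of θ_{s,t}. -/

import Mathlib

open WeierstrassCurve Polynomial

/-- The Weierstrass curve `y² = x³ + sx + t` over the polynomial ring `R[s,t]`, where
`s = X 0` and `t = X 1` in `MvPolynomial (Fin 2) R`. -/
noncomputable def Wst (R : Type*) [CommRing R] : WeierstrassCurve (MvPolynomial (Fin 2) R) :=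
  { a₁ := 0, a₂ := 0, a₃ := 0, a₄ := MvPolynomial.X 0, a₆ := MvPolynomial.X 1 }

/-- The polynomial `σ_{s,t,x̃}(x) = -(ψ_{p+1}ψ_{p-1})(x) + (x - x̃)·ψ_p²(x)` mod `p`, whose
zeros are the `x`-coordinates of points `S` with `x([p]S) = x̃`; an element of
`(F_p[s,t][x̃])[x]`, where the extra variable `x̃` is `Polynomial.X` of the coefficient ring. -/
noncomputable def sigmaP (p : ℕ) [Fact p.Prime] :
    Polynomial (Polynomial (MvPolynomial (Fin 2) (ZMod p))) :=
  ((Wst (ZMod p)).Φ (p : ℤ)).map (Polynomial.C) -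
    Polynomial.C (Polynomial.X) * ((Wst (ZMod p)).ΨSq (p : ℤ)).map (Polynomial.C)

/-- The `x̃`-linear parts `c_{pi-1}` of the coefficients of `η_{s,t,x̃}` satisfy
`-(ψ_{p,s,t} mod p)² = ∑_{i=1}^{p-1} c_{pi-1} x^(p²-pi) + c_{p²-1}`; in particular
`c_{p²-1} = -a_{(p²-1)/2}²` where `a_{(p²-1)/2}` is the constant coefficient of `θ_{s,t}`. -/
theorem eta_c_coeffs (p : ℕ) [Fact p.Prime] (hodd : Odd p) (hp3 : 3 ≤ p)
    (η : Polynomial (Polynomial (MvPolynomial (Fin 2) (ZMod p))))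
    (hη : η.comp (Polynomial.X ^ p) = sigmaP p)
    (θ : Polynomial (MvPolynomial (Fin 2) (ZMod p)))
    (hθ : θ.comp (Polynomial.X ^ p) = (Wst (ZMod p)).preΨ (p : ℤ)) :
    (-((Wst (ZMod p)).preΨ (p : ℤ)) ^ 2 =
      (∑ i ∈ Finset.Icc 1 (p - 1),
        Polynomial.C ((η.coeff (p - i)).coeff 1) * Polynomial.X ^ (p ^ 2 - p * i)) +
        Polynomial.C ((η.coeff 0).coeff 1)) ∧
    (η.coeff 0).coeff 1 = -(θ.coeff 0) ^ 2 := by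
  have hp : 0 < p := by omega
  have hpe : ¬ Even ((p : ℤ)) := by
    rw [Int.even_coe_nat]
    exact (Nat.not_even_iff_odd).mpr hodd
  have hΨSq : (Wst (ZMod p)).ΨSq (p : ℤ) = (Wst (ZMod p)).preΨ (p : ℤ) ^ 2 := by
    rw [ΨSq, if_neg hpe, mul_one]
  have hθ' : (Wst (ZMod p)).preΨ (p : ℤ) = Polynomial.expand _ p θ := by
    rw [← hθ, Polynomial.expand_eq_comp_X_pow]
  -- degree bound
  have hdeg : (θ ^ 2).natDegree < p := by
    have h1 : (θ.comp (Polynomial.X ^ p : Polynomial (MvPolynomial (Fin 2) (ZMod p)))).natDegree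
        = θ.natDegree * p := by
      rw [Polynomial.natDegree_comp, Polynomial.natDegree_X_pow]
    have h2 : θ.natDegree * p ≤ (p ^ 2 - 1) / 2 := by
      rw [← h1, hθ]
      have := (Wst (ZMod p)).natDegree_preΨ_le (p : ℤ)
      rw [if_neg hpe, Int.natAbs_natCast] at this
      exact this
    have h3 : 2 * (θ.natDegree * p) ≤ p ^ 2 - 1 := by omega
    have h4 : 2 * θ.natDegree < p := by
      have : (2 * θ.natDegree) * p < p * p := by
        have hpp : 0 < p ^ 2 := by positivity
        calc (2 * θ.natDegree) * p = 2 * (θ.natDegree * p) := by ring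
          _ ≤ p ^ 2 - 1 := h3
          _ < p * p := by rw [pow_two] at hpp ⊢; omega
      exact Nat.lt_of_mul_lt_mul_right this
    calc (θ ^ 2).natDegree ≤ 2 * θ.natDegree := by
          rw [Polynomial.natDegree_pow]
      _ < p := h4
  -- key coefficient computation
  have hcoeff : ∀ k, (η.coeff k).coeff 1 = -((θ ^ 2).coeff k) := by
    intro k
    have h1 : η.coeff k = (sigmaP p).coeff (p * k) := by
      rw [← hη, ← Polynomial.expand_eq_comp_X_pow, Polynomial.coeff_expand_mul' hp]
    rw [h1]
    have h2 : (sigmaP p).coeff (p * k) =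
        Polynomial.C (((Wst (ZMod p)).Φ (p : ℤ)).coeff (p * k)) -
          Polynomial.X * Polynomial.C (((Wst (ZMod p)).ΨSq (p : ℤ)).coeff (p * k)) := by
      simp [sigmaP, Polynomial.coeff_sub, Polynomial.coeff_map, Polynomial.coeff_C_mul]
    rw [h2]
    have h3 : ((Wst (ZMod p)).ΨSq (p : ℤ)).coeff (p * k) = (θ ^ 2).coeff k := by
      rw [hΨSq, hθ', ← map_pow, Polynomial.coeff_expand_mul' hp]
    have h4 : (Polynomial.X * Polynomial.C (((Wst (ZMod p)).ΨSq (p : ℤ)).coeff (p * k))).coeff 1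
        = ((Wst (ZMod p)).ΨSq (p : ℤ)).coeff (p * k) := by
      simpa using Polynomial.coeff_X_mul
        (Polynomial.C (((Wst (ZMod p)).ΨSq (p : ℤ)).coeff (p * k))) 0
    rw [Polynomial.coeff_sub, h4, h3, Polynomial.coeff_C, if_neg one_ne_zero, zero_sub]
  constructor
  · -- the main identity
    have hexp : (Polynomial.expand _ p (θ ^ 2) : Polynomial (MvPolynomial (Fin 2) (ZMod p))) =
        ∑ j ∈ Finset.range p, Polynomial.C ((θ ^ 2).coeff j) * Polynomial.X ^ (p * j) := by
      conv_lhs => rw [(θ ^ 2).as_sum_range' p hdeg]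
      rw [map_sum]
      refine Finset.sum_congr rfl fun j _ => ?_
      rw [← Polynomial.C_mul_X_pow_eq_monomial, map_mul, Polynomial.expand_C, map_pow,
        Polynomial.expand_X, ← pow_mul]
    have hL : -((Wst (ZMod p)).preΨ (p : ℤ)) ^ 2 =
        ∑ j ∈ Finset.range p, Polynomial.C (-(θ ^ 2).coeff j) * Polynomial.X ^ (p * j) := by
      rw [hθ', ← map_pow, hexp, ← Finset.sum_neg_distrib]
      exact Finset.sum_congr rfl fun j _ => by rw [map_neg]; exact (neg_mul _ _).symm

    rw [hL]
    have hstep : ∀ i ∈ Finset.Icc 1 (p - 1),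
        Polynomial.C ((η.coeff (p - i)).coeff 1) * Polynomial.X ^ (p ^ 2 - p * i) =
        Polynomial.C (-(θ ^ 2).coeff (p - i)) * Polynomial.X ^ (p * (p - i)) := by
      intro i hi
      rw [hcoeff]
      congr 2
      rw [Nat.mul_sub, pow_two]
    rw [Finset.sum_congr rfl hstep, hcoeff 0]
    have hrefl : (∑ i ∈ Finset.Icc 1 (p - 1),
        Polynomial.C (-(θ ^ 2).coeff (p - i)) * Polynomial.X ^ (p * (p - i))) =
        ∑ j ∈ Finset.Icc 1 (p - 1), Polynomial.C (-(θ ^ 2).coeff j) * Polynomial.X ^ (p * j) := by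
      refine Finset.sum_nbij' (fun i => p - i) (fun j => p - j) ?_ ?_ ?_ ?_ ?_ <;>
        intro a ha <;> simp only [Finset.mem_Icc] at * <;> try omega
    rw [hrefl]
    have hrange : Finset.range p = insert 0 (Finset.Icc 1 (p - 1)) := by
      ext j
      simp only [Finset.mem_range, Finset.mem_insert, Finset.mem_Icc]
      omega
    rw [hrange, Finset.sum_insert (by simp), mul_zero, pow_zero, mul_one, add_comm]
  · rw [hcoeff 0, neg_inj, pow_two, pow_two, Polynomial.mul_coeff_zero]
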